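/- For subdiagrams D, E ⊆ G, the map Φ_{D,E} restricts to a bijection from the set of blue arrows N_b(D, U_E) = {(i,j) ∈ D × U_E : 0 ≤ g(j)−g(i) < a, j strictly northwest of i} onto D_b = {c ∈ D ∩ E : b(leg_E(c)+1) ≤ a·arm_D(c)}, where Φ_{D,E}(i,j) is the intersection of the row of i and the column of j. -/
import Mathlib

def g (a b : ℤ) (p : ℤ × ℤ) : ℤ := a * b - a * p.1 - b * p.2

def Gset (a b : ℤ) : Set (ℤ × ℤ) := {p | 1 ≤ p.1 ∧ 1 ≤ p.2 ∧ 0 < g a b p}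

def IsSubdiagram (a b : ℤ) (D : Set (ℤ × ℤ)) : Prop :=
  D ⊆ Gset a b ∧ ∀ p ∈ D, ∀ q ∈ Gset a b, q.1 ≤ p.1 → q.2 ≤ p.2 → q ∈ D

def U (D : Set (ℤ × ℤ)) : Set (ℤ × ℤ) :=
  {p | p ∉ D ∧ ((p.1, p.2 - 1) ∈ D ∨ (1 ≤ p.1 ∧ p.2 - 1 ≤ 0))}

/-- arm_D(c) = max {k : c − ka ∈ D}, where a acts as the vector (−1,0). -/
noncomputable def arm (D : Set (ℤ × ℤ)) (c : ℤ × ℤ) : ℕ :=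
  sSup {k : ℕ | (c.1 + (k : ℤ), c.2) ∈ D}

/-- leg_D(c) = max {k : c − kb ∈ D}, where b acts as the vector (0,−1). -/
noncomputable def leg (D : Set (ℤ × ℤ)) (c : ℤ × ℤ) : ℕ :=
  sSup {k : ℕ | (c.1, c.2 + (k : ℤ)) ∈ D}

lemma armSet_bdd {a b : ℤ} (ha : 0 < a) (hb : 0 < b) {D : Set (ℤ × ℤ)}
    (hD : D ⊆ Gset a b) (c : ℤ × ℤ) :
    BddAbove {k : ℕ | (c.1 + (k : ℤ), c.2) ∈ D} := by
  refine ⟨(b - c.1).toNat, fun k hk => ?_⟩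
  obtain ⟨h1, h2, h3⟩ := hD hk
  simp only [g] at h1 h2 h3
  have h4 : a * (c.1 + (k : ℤ)) < a * b := by nlinarith
  have h5 : c.1 + (k : ℤ) < b := lt_of_mul_lt_mul_left h4 (le_of_lt ha)
  omega

lemma legSet_bdd {a b : ℤ} (ha : 0 < a) (hb : 0 < b) {D : Set (ℤ × ℤ)}
    (hD : D ⊆ Gset a b) (c : ℤ × ℤ) :
    BddAbove {k : ℕ | (c.1, c.2 + (k : ℤ)) ∈ D} := by
  refine ⟨(a - c.2).toNat, fun k hk => ?_⟩
  obtain ⟨h1, h2, h3⟩ := hD hk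
  simp only [g] at h1 h2 h3
  have h4 : b * (c.2 + (k : ℤ)) < b * a := by nlinarith
  have h5 : c.2 + (k : ℤ) < a := lt_of_mul_lt_mul_left h4 (le_of_lt hb)
  omega

/-- Φ_{D,E} : (i,j) ↦ (column of j, row of i) is a bijection from
the blue arrows N_b(D, U_E) onto D_b = {c ∈ D ∩ E : b(leg_E(c)+1) ≤ a·arm_D(c)}. -/
theorem stmt12 (a b : ℤ) (ha : 1 < a) (hab : a < b) (hcop : IsCoprime a b)
    (D E : Set (ℤ × ℤ)) (hD : IsSubdiagram a b D) (hE : IsSubdiagram a b E) :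
    Set.BijOn (fun p : (ℤ × ℤ) × (ℤ × ℤ) => (p.2.1, p.1.2))
      {p : (ℤ × ℤ) × (ℤ × ℤ) | p.1 ∈ D ∧ p.2 ∈ U E ∧
        0 ≤ g a b p.2 - g a b p.1 ∧ g a b p.2 - g a b p.1 < a ∧
        p.2.1 < p.1.1 ∧ p.1.2 < p.2.2}
      {c : ℤ × ℤ | c ∈ D ∧ c ∈ E ∧
        b * ((leg E c : ℤ) + 1) ≤ a * (arm D c : ℤ)} := by
  have ha0 : (0:ℤ) < a := by linarith
  have hb0 : (0:ℤ) < b := by linarith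
  have jfacts : ∀ i j : ℤ × ℤ, i ∈ D → j ∈ U E →
      0 ≤ g a b j - g a b i → i.2 < j.2 →
      (j.1, j.2 - 1) ∈ E ∧ j ∈ Gset a b := by
    intro i j hiD hjU hg1 hij
    obtain ⟨hi1, hi2, hi3⟩ := hD.1 hiD
    have hbr : (j.1, j.2 - 1) ∈ E := by
      rcases hjU.2 with h | h
      · exact h
      · omega
    obtain ⟨hj1, hj2, _⟩ := hE.1 hbr
    refine ⟨hbr, ⟨hj1, by omega, by linarith⟩⟩
  refine ⟨?_, ?_, ?_⟩
  · -- MapsTo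
    rintro ⟨i, j⟩ ⟨hiD, hjU, hg1, hg2, hji, hij⟩
    simp only [Set.mem_setOf_eq] at *
    obtain ⟨hbr, hjG⟩ := jfacts i j hiD hjU hg1 hij
    obtain ⟨hi1, hi2, hi3⟩ := hD.1 hiD
    obtain ⟨hj1, hj2, hj3⟩ := id hjG
    set c : ℤ × ℤ := (j.1, i.2) with hc
    have hcG : c ∈ Gset a b := by
      refine ⟨hj1, hi2, ?_⟩
      simp only [g, hc] at hi3 ⊢
      nlinarith
    have hcD : c ∈ D := hD.2 i hiD c hcG (le_of_lt hji) le_rfl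
    have hcE : c ∈ E := hE.2 (j.1, j.2 - 1) hbr c hcG le_rfl (by show i.2 ≤ j.2 - 1; omega)
    refine ⟨hcD, hcE, ?_⟩
    -- arm ≥ i.1 - j.1
    have hm : (i.1 - j.1).toNat ∈ {k : ℕ | (c.1 + (k : ℤ), c.2) ∈ D} := by
      simp only [Set.mem_setOf_eq, hc]
      have : j.1 + ((i.1 - j.1).toNat : ℤ) = i.1 := by omega
      rw [this]
      exact hiD
    have harm : (i.1 - j.1).toNat ≤ arm D c :=
      le_csSup (armSet_bdd ha0 hb0 hD.1 c) hm
    -- leg ≤ j.2 - i.2 - 1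
    have hlegle : ∀ k ∈ {k : ℕ | (c.1, c.2 + (k : ℤ)) ∈ E}, k ≤ (j.2 - i.2 - 1).toNat := by
      intro k hk
      simp only [Set.mem_setOf_eq, hc] at hk
      by_contra hcon
      push_neg at hcon
      have hge : j.2 ≤ i.2 + (k : ℤ) := by omega
      exact hjU.1 (hE.2 (j.1, i.2 + (k:ℤ)) hk j hjG le_rfl hge)
    have hleg : leg E c ≤ (j.2 - i.2 - 1).toNat := by
      refine csSup_le ⟨0, ?_⟩ hlegle
      simp only [Set.mem_setOf_eq]
      simpa using hcE
    have hg' : b * (j.2 - i.2) ≤ a * (i.1 - j.1) := by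
      simp only [g] at hg1; linarith
    have h1 : b * ((leg E c : ℤ) + 1) ≤ b * (j.2 - i.2) := by
      have hh : (leg E c : ℤ) + 1 ≤ j.2 - i.2 := by omega
      nlinarith
    have h2 : a * (i.1 - j.1) ≤ a * (arm D c : ℤ) := by
      have hh : i.1 - j.1 ≤ (arm D c : ℤ) := by omega
      nlinarith
    linarith
  · -- InjOn
    rintro ⟨i, j⟩ ⟨hiD, hjU, hg1, hg2, hji, hij⟩ ⟨i', j'⟩ ⟨hiD', hjU', hg1', hg2', hji', hij'⟩ heq
    simp only [Prod.mk.injEq] at heq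
    obtain ⟨hcol, hrow⟩ := heq
    obtain ⟨hbr, hjG⟩ := jfacts i j hiD hjU hg1 hij
    obtain ⟨hbr', hjG'⟩ := jfacts i' j' hiD' hjU' hg1' hij'
    have hj2 : j.2 = j'.2 := by
      by_contra hne
      rcases lt_or_gt_of_ne hne with h | h
      · exact hjU.1 (hE.2 (j'.1, j'.2 - 1) hbr' j hjG (le_of_eq hcol) (by show j.2 ≤ j'.2 - 1; omega))
      · exact hjU'.1 (hE.2 (j.1, j.2 - 1) hbr j' hjG' (le_of_eq hcol.symm) (by show j'.2 ≤ j.2 - 1; omega))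
    have hi1 : i.1 = i'.1 := by
      simp only [g] at hg1 hg2 hg1' hg2'
      rcases lt_trichotomy i.1 i'.1 with h | h | h
      · nlinarith
      · exact h
      · nlinarith
    have hii : i = i' := Prod.ext hi1 hrow
    have hjj : j = j' := Prod.ext hcol hj2
    rw [hii, hjj]
  · -- SurjOn
    rintro c ⟨hcD, hcE, hineq⟩
    obtain ⟨hc1, hc2, hc3⟩ := hD.1 hcD
    -- leg attained
    have hlegmem : (c.1, c.2 + (leg E c : ℤ)) ∈ E := by
      have h0 : (0 : ℕ) ∈ {k : ℕ | (c.1, c.2 + (k : ℤ)) ∈ E} := by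
        simp only [Set.mem_setOf_eq]; simpa using hcE
      have := Nat.sSup_mem ⟨0, h0⟩ (legSet_bdd ha0 hb0 hE.1 c)
      simpa [leg] using this
    -- arm attained
    have harmmem : (c.1 + (arm D c : ℤ), c.2) ∈ D := by
      have h0 : (0 : ℕ) ∈ {k : ℕ | (c.1 + (k : ℤ), c.2) ∈ D} := by
        simp only [Set.mem_setOf_eq]; simpa using hcD
      have := Nat.sSup_mem ⟨0, h0⟩ (armSet_bdd ha0 hb0 hD.1 c)
      simpa [arm] using this
    -- j is not in E
    have hjnotE : (c.1, c.2 + (leg E c : ℤ) + 1) ∉ E := by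
      intro hmem
      have hk : (leg E c + 1 : ℕ) ∈ {k : ℕ | (c.1, c.2 + (k : ℤ)) ∈ E} := by
        simp only [Set.mem_setOf_eq]
        push_cast
        convert hmem using 2
        ring
      have h2 : leg E c + 1 ≤ leg E c := le_csSup (legSet_bdd ha0 hb0 hE.1 c) hk
      omega
    obtain ⟨n, hn⟩ : ∃ n : ℤ, n = (leg E c : ℤ) + 1 := ⟨_, rfl⟩
    have hn1 : 1 ≤ n := by omega
    obtain ⟨m, hm⟩ : ∃ m : ℤ, m = (b * n + a - 1) / a := ⟨_, rfl⟩
    have hdiv : a * m + (b * n + a - 1) % a = b * n + a - 1 := by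
      rw [hm]; exact Int.mul_ediv_add_emod (b * n + a - 1) a
    have hmod1 : 0 ≤ (b * n + a - 1) % a := Int.emod_nonneg _ (by omega)
    have hmod2 : (b * n + a - 1) % a ≤ a - 1 := by
      have := Int.emod_lt_of_pos (b * n + a - 1) ha0; omega
    have ham1 : b * n ≤ a * m := by linarith
    have ham2 : a * m < b * n + a := by linarith
    have hineq' : b * n ≤ a * (arm D c : ℤ) := by rw [hn]; exact hineq
    -- m ≤ arm
    have hmA : m ≤ (arm D c : ℤ) := by
      have h1 : a * m < a * ((arm D c : ℤ) + 1) := by linarith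
      have h2 : m < (arm D c : ℤ) + 1 := lt_of_mul_lt_mul_left h1 (le_of_lt ha0)
      omega
    have hm1 : 1 ≤ m := by
      have h1 : a * 1 < b * n := by nlinarith
      have h2 : a * 1 < a * m := by linarith
      have := lt_of_mul_lt_mul_left h2 (le_of_lt ha0)
      omega
    -- i ∈ D
    have hAG : (c.1 + (arm D c : ℤ), c.2) ∈ Gset a b := hD.1 harmmem
    have hiG : (c.1 + m, c.2) ∈ Gset a b := by
      refine ⟨by omega, hc2, ?_⟩
      obtain ⟨_, _, hA3⟩ := hAG
      simp only [g] at hA3 ⊢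
      have hmul : a * m ≤ a * (arm D c : ℤ) := by nlinarith
      nlinarith
    have hiD : (c.1 + m, c.2) ∈ D :=
      hD.2 _ harmmem _ hiG (by show c.1 + m ≤ c.1 + (arm D c : ℤ); omega) le_rfl
    -- j ∈ U E
    have hjU : (c.1, c.2 + n) ∈ U E := by
      constructor
      · rw [hn, ← add_assoc]; exact hjnotE
      · refine Or.inl ?_
        have he : c.2 + n - 1 = c.2 + (leg E c : ℤ) := by omega
        show (c.1, c.2 + n - 1) ∈ E
        rw [he]; exact hlegmem
    have hgeq : g a b (c.1, c.2 + n) - g a b (c.1 + m, c.2) = a * m - b * n := by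
      simp only [g]; ring
    refine ⟨((c.1 + m, c.2), (c.1, c.2 + n)), ⟨hiD, hjU, ?_, ?_, ?_, ?_⟩, ?_⟩
    · rw [hgeq]; linarith
    · rw [hgeq]; linarith
    · show c.1 < c.1 + m; omega
    · show c.2 < c.2 + n; omega
    · show (c.1, c.2) = c; exact Prod.ext rfl rfl
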